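/- Let F be a number field, O_F its ring of integers, and n ≥ 1. Define Z₁ = {(x, I) ∈ F^× ⊕ Div(F) : nI = -div(x)} and B₁ = {(x^n, -div(x)) : x ∈ F^×}, where Div(F) is the group of fractional ideals and div(x) the principal fractional ideal of x. Then B₁ is a subgroup of Z₁, and the map Z₁/B₁ → Cl_F[n] sending (x, I) to the ideal class of I is a well-defined surjective group homomorphism with kernel isomorphic to O_F^×/(O_F^×)^n. -/

import Mathlib

open NumberField
open scoped nonZeroDivisors

variable (F : Type) [Field F] [NumberField F]

/-- The group `Div F` of fractional ideals of a number field `F` (written multiplicatively). -/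
abbrev DivF := (FractionalIdeal (𝓞 F)⁰ F)ˣ

/-- `div : F^× → Div F`, sending `x` to the principal fractional ideal it generates. -/
noncomputable def divF : Fˣ →* DivF F := toPrincipalIdeal (𝓞 F) F

/-- The homomorphism `(x, I) ↦ I^n ⬝ div(x)`, whose kernel is
`Z₁ = {(x, I) : I^n = div(x)⁻¹}`. -/
noncomputable def z1Hom (n : ℕ) : Fˣ × DivF F →* DivF F :=
  ((powMonoidHom n).comp (MonoidHom.snd _ _)) * ((divF F).comp (MonoidHom.fst _ _))

/-- `Z₁ = {(x, I) ∈ F^× ⊕ Div F : I^n = div(x)⁻¹}` (multiplicative notation for `nI = -div(x)`). -/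
noncomputable def Z1 (n : ℕ) : Subgroup (Fˣ × DivF F) := (z1Hom F n).ker

/-- The homomorphism `x ↦ (x^n, div(x)⁻¹)`, whose range is `B₁`. -/
noncomputable def b1Hom (n : ℕ) : Fˣ →* Fˣ × DivF F :=
  (powMonoidHom n).prod (divF F)⁻¹

/-- `B₁ = {(x^n, div(x)⁻¹) : x ∈ F^×}`. -/
noncomputable def B1 (n : ℕ) : Subgroup (Fˣ × DivF F) := (b1Hom F n).range

/-! ### Auxiliary lemmas -/

/-- The map `(𝓞 F)ˣ →* Fˣ`. -/
noncomputable def uF : (𝓞 F)ˣ →* Fˣ := Units.map (algebraMap (𝓞 F) F : (𝓞 F) →* F)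

lemma uF_injective : Function.Injective (uF F) := by
  intro a b h
  ext
  exact congrArg Units.val h

lemma z1Hom_apply (n : ℕ) (p : Fˣ × DivF F) : z1Hom F n p = p.2 ^ n * divF F p.1 := rfl

lemma b1Hom_apply (n : ℕ) (x : Fˣ) : b1Hom F n x = (x ^ n, (divF F x)⁻¹) := rfl

lemma mem_Z1 (n : ℕ) (p : Fˣ × DivF F) : p ∈ Z1 F n ↔ p.2 ^ n * divF F p.1 = 1 := Iff.rfl

lemma divF_uF (u : (𝓞 F)ˣ) : divF F (uF F u) = 1 := by
  rw [divF, toPrincipalIdeal_eq_iff, Units.val_one]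
  have h1 : FractionalIdeal.spanSingleton (𝓞 F)⁰ ((uF F u : Fˣ) : F) ≤ 1 := by
    rw [FractionalIdeal.spanSingleton_le_iff_mem]
    exact (FractionalIdeal.mem_one_iff _).mpr ⟨u, rfl⟩
  have h2 : (1 : FractionalIdeal (𝓞 F)⁰ F) ≤
      FractionalIdeal.spanSingleton (𝓞 F)⁰ ((uF F u : Fˣ) : F) := by
    rw [FractionalIdeal.one_le, FractionalIdeal.mem_spanSingleton]
    refine ⟨(u⁻¹ : (𝓞 F)ˣ), ?_⟩
    rw [Algebra.smul_def]
    show algebraMap (𝓞 F) F ↑u⁻¹ * algebraMap (𝓞 F) F u = 1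
    rw [← map_mul, ← map_one (algebraMap (𝓞 F) F)]
    congr 1
    exact_mod_cast u.inv_mul
  exact le_antisymm h1 h2

lemma exists_uF_of_divF_eq_one (x : Fˣ) (hx : divF F x = 1) : ∃ u : (𝓞 F)ˣ, uF F u = x := by
  rw [divF, toPrincipalIdeal_eq_iff, Units.val_one] at hx
  have hxmem : (x : F) ∈ (1 : FractionalIdeal (𝓞 F)⁰ F) := by
    rw [← hx]; exact FractionalIdeal.mem_spanSingleton_self _ _
  obtain ⟨a, ha⟩ := (FractionalIdeal.mem_one_iff _).mp hxmem
  have h1mem : (1 : F) ∈ FractionalIdeal.spanSingleton (𝓞 F)⁰ (x : F) := by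
    rw [hx]; exact FractionalIdeal.one_mem_one _
  obtain ⟨b, hb⟩ := (FractionalIdeal.mem_spanSingleton _).mp h1mem
  have hba : b * a = 1 := by
    apply IsFractionRing.injective (𝓞 F) F
    rw [map_mul, map_one, ha]
    rw [Algebra.smul_def] at hb
    exact hb
  have hab : a * b = 1 := by rw [mul_comm]; exact hba
  refine ⟨⟨a, b, hab, hba⟩, ?_⟩
  ext
  exact ha

lemma mk_divF_eq_one (x : Fˣ) : ClassGroup.mk F (divF F x) = 1 := by
  rw [ClassGroup.mk_eq_one_iff]
  refine ⟨⟨(x : F), ?_⟩⟩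
  rw [← FractionalIdeal.coe_spanSingleton (𝓞 F)⁰ (x : F), ← coe_toPrincipalIdeal x, divF]

lemma exists_divF_of_mk_eq_one (I : DivF F) (hI : ClassGroup.mk F I = 1) :
    ∃ x : Fˣ, divF F x = I := by
  have hp := ClassGroup.mk_eq_one_iff.mp hI
  obtain ⟨y, hy⟩ := (FractionalIdeal.isPrincipal_iff _).mp hp
  have hy0 : y ≠ 0 := by
    rintro rfl
    exact Units.ne_zero I (by rw [hy, FractionalIdeal.spanSingleton_zero])
  refine ⟨Units.mk0 y hy0, ?_⟩
  rw [divF, toPrincipalIdeal_eq_iff]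
  exact hy.symm

theorem stmt_14 (n : ℕ) (hn : 1 ≤ n) :
    B1 F n ≤ Z1 F n ∧
    ∃ f : (Z1 F n ⧸ (B1 F n).subgroupOf (Z1 F n)) →* ClassGroup (𝓞 F),
      (∀ z : Z1 F n, f (QuotientGroup.mk z) = ClassGroup.mk F z.val.2) ∧
      (∀ w, (f w) ^ n = 1) ∧
      (∀ c : ClassGroup (𝓞 F), c ^ n = 1 → ∃ w, f w = c) ∧
      Nonempty (f.ker ≃* ((𝓞 F)ˣ ⧸ (powMonoidHom n : (𝓞 F)ˣ →* (𝓞 F)ˣ).range)) := by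
  have hB1Z1 : B1 F n ≤ Z1 F n := by
    rintro _ ⟨x, rfl⟩
    rw [mem_Z1, b1Hom_apply]
    simp only [map_pow, inv_pow, inv_mul_cancel]
  refine ⟨hB1Z1, ?_⟩
  -- the homomorphism on Z1
  set φ : (Z1 F n) →* ClassGroup (𝓞 F) :=
    (ClassGroup.mk (K := F)).comp ((MonoidHom.snd _ _).comp (Z1 F n).subtype) with hφdef
  have hφ_apply : ∀ z : Z1 F n, φ z = ClassGroup.mk F z.val.2 := fun z => rfl
  have hφ1 : (B1 F n).subgroupOf (Z1 F n) ≤ φ.ker := by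
    intro z hz
    rw [MonoidHom.mem_ker]
    rw [Subgroup.mem_subgroupOf] at hz
    obtain ⟨x, hx⟩ := hz
    rw [hφ_apply, ← hx, b1Hom_apply]
    show ClassGroup.mk F (divF F x)⁻¹ = 1
    rw [map_inv, mk_divF_eq_one, inv_one]
  refine ⟨QuotientGroup.lift _ φ hφ1, fun z => rfl, ?_, ?_, ?_⟩
  · -- torsion
    intro w
    induction w using QuotientGroup.induction_on with
    | H z =>
      rw [QuotientGroup.lift_mk, hφ_apply, ← map_pow]
      have hz : z.val.2 ^ n * divF F z.val.1 = 1 := z.property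
      have : z.val.2 ^ n = (divF F z.val.1)⁻¹ := eq_inv_of_mul_eq_one_left hz
      rw [this, map_inv, mk_divF_eq_one, inv_one]
  · -- surjectivity onto n-torsion
    intro c hc
    obtain ⟨I, rfl⟩ := ClassGroup.induction (K := F)
      (P := fun c => ∃ I : DivF F, ClassGroup.mk F I = c) (fun I => ⟨I, rfl⟩) c
    rw [← map_pow] at hc
    obtain ⟨x, hx⟩ := exists_divF_of_mk_eq_one F (I ^ n) hc
    have hz : (x⁻¹, I) ∈ Z1 F n := by
      rw [mem_Z1]
      show I ^ n * divF F x⁻¹ = 1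
      rw [map_inv, ← hx, mul_inv_cancel]
    exact ⟨QuotientGroup.mk ⟨(x⁻¹, I), hz⟩, rfl⟩
  · -- kernel
    have hψmem : ∀ u : (𝓞 F)ˣ, ((uF F u, 1) : Fˣ × DivF F) ∈ Z1 F n := by
      intro u
      rw [mem_Z1]
      show (1 : DivF F) ^ n * divF F (uF F u) = 1
      rw [one_pow, one_mul, divF_uF]
    set ψ : (𝓞 F)ˣ →* Z1 F n :=
      MonoidHom.codRestrict ((uF F).prod 1) (Z1 F n) hψmem with hψdef
    set g : (𝓞 F)ˣ →* (Z1 F n ⧸ (B1 F n).subgroupOf (Z1 F n)) :=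
      (QuotientGroup.mk' ((B1 F n).subgroupOf (Z1 F n))).comp ψ with hgdef
    have hψval : ∀ u : (𝓞 F)ˣ, ((ψ u : Z1 F n) : Fˣ × DivF F) = (uF F u, 1) := fun u => rfl
    have hgker : g.ker = (powMonoidHom n : (𝓞 F)ˣ →* (𝓞 F)ˣ).range := by
      ext u
      rw [MonoidHom.mem_ker, hgdef, MonoidHom.comp_apply, QuotientGroup.mk'_apply,
        QuotientGroup.eq_one_iff, Subgroup.mem_subgroupOf, hψval]
      constructor
      · rintro ⟨x, hx⟩
        rw [b1Hom_apply] at hx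
        have h1 : x ^ n = uF F u := congrArg Prod.fst hx
        have h2 : (divF F x)⁻¹ = 1 := congrArg Prod.snd hx
        obtain ⟨v, hv⟩ := exists_uF_of_divF_eq_one F x (by rwa [inv_eq_one] at h2)
        refine ⟨v, uF_injective F ?_⟩
        show uF F (v ^ n) = uF F u
        rw [map_pow, hv, h1]
      · rintro ⟨v, rfl⟩
        refine ⟨uF F v, ?_⟩
        rw [b1Hom_apply, divF_uF, inv_one, ← map_pow]
        rfl
    have hgrange : g.range = (QuotientGroup.lift _ φ hφ1).ker := by
      ext w
      constructor
      · rintro ⟨u, rfl⟩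
        rw [MonoidHom.mem_ker, hgdef, MonoidHom.comp_apply, QuotientGroup.mk'_apply,
          QuotientGroup.lift_mk, hφ_apply, hψval]
        exact map_one _
      · intro hw
        obtain ⟨z, rfl⟩ := QuotientGroup.mk_surjective w
        rw [MonoidHom.mem_ker, QuotientGroup.lift_mk, hφ_apply] at hw
        obtain ⟨y, hy⟩ := exists_divF_of_mk_eq_one F z.val.2 hw
        have hz : z.val.2 ^ n * divF F z.val.1 = 1 := z.property
        have hd1 : divF F (y ^ n * z.val.1) = 1 := by
          rw [map_mul, map_pow, hy]
          exact hz
        obtain ⟨u, hu⟩ := exists_uF_of_divF_eq_one F _ hd1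
        refine ⟨u, ?_⟩
        rw [hgdef, MonoidHom.comp_apply, QuotientGroup.mk'_apply]
        rw [QuotientGroup.eq]
        rw [Subgroup.mem_subgroupOf]
        show ((ψ u : Z1 F n) : Fˣ × DivF F)⁻¹ * (z : Fˣ × DivF F) ∈ B1 F n
        rw [hψval]
        refine ⟨y⁻¹, ?_⟩
        rw [b1Hom_apply]
        refine Prod.ext ?_ ?_
        · show (y⁻¹) ^ n = (uF F u)⁻¹ * z.val.1
          rw [hu, inv_pow, mul_inv, inv_mul_cancel_right]
        · show (divF F y⁻¹)⁻¹ = (1 : DivF F)⁻¹ * z.val.2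
          rw [inv_one, one_mul, map_inv, inv_inv, hy]
    exact ⟨((MulEquiv.subgroupCongr hgrange.symm).trans
      (QuotientGroup.quotientKerEquivRange g).symm).trans
      (QuotientGroup.quotientMulEquivOfEq hgker)⟩
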